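/- Near the branch point 0, the logarithmic derivative of φ satisfies |φ'(εe^{iθ})/φ(εe^{iθ})| = O(ε^{−2/3}) as ε → 0⁺: there exist constants C > 0 and ε₀ > 0 such that for all ε ∈ (0,ε₀) and all θ ∈ (0,2π), |φ'(εe^{iθ})/φ(εe^{iθ})| ≤ C·ε^{−2/3}. -/

import Mathlib

open Filter Topology Polynomial

/-- Argument in `[0, 2π)`. -/
noncomputable def argNN (z : ℂ) : ℝ :=
  if Complex.arg z < 0 then Complex.arg z + 2 * Real.pi else Complex.arg z

/-- Square root with branch cut along the positive real axis:
`ρ e^{iθ} ↦ ρ^{1/2} e^{iθ/2}` with `θ ∈ [0, 2π)`. -/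
noncomputable def csqrt (z : ℂ) : ℂ :=
  ((‖z‖ ^ ((1 : ℝ) / 2) : ℝ) : ℂ) * Complex.exp (Complex.I * (argNN z : ℂ) / 2)

/-- Principal cube root: `ρ e^{iθ} ↦ ρ^{1/3} e^{iθ/3}` with `θ ∈ (−π, π]`. -/
noncomputable def ccbrt (z : ℂ) : ℂ :=
  ((‖z‖ ^ ((1 : ℝ) / 3) : ℝ) : ℂ) * Complex.exp (Complex.I * (Complex.arg z : ℂ) / 3)

/-- `ω₃ = e^{2πi/3}`. -/
noncomputable def ω₃ : ℂ := Complex.exp (2 * (Real.pi : ℂ) * Complex.I / 3)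

/-- The function `φ` from the paper. -/
noncomputable def phi (z : ℂ) : ℂ :=
  (27 / 4) * ((3 * ω₃ / 2) * ccbrt z *
    (ω₃ * ccbrt (-1 + csqrt (1 - z)) + ccbrt (-1 - csqrt (1 - z))) - 1)

/-- The density `w` of the measure `υ_{[0,1]}`. -/
noncomputable def w (x : ℝ) : ℝ :=
  (Real.sqrt 3 / (4 * Real.pi)) *
    (((1 + Real.sqrt (1 - x)) ^ ((1 : ℝ) / 3) + (1 - Real.sqrt (1 - x)) ^ ((1 : ℝ) / 3)) /
      (x ^ ((2 : ℝ) / 3) * Real.sqrt (1 - x)))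

open Complex

lemma log_eq (z : ℂ) :
    Complex.log z = (Real.log (‖z‖) : ℂ) + (Complex.arg z : ℂ) * Complex.I := by
  apply Complex.ext <;> simp [Complex.log_re, Complex.log_im]

lemma ccbrt_eq_cpow {z : ℂ} (hz : z ≠ 0) : ccbrt z = z ^ ((1:ℂ)/3) := by
  rw [Complex.cpow_def_of_ne_zero hz, log_eq, ccbrt]
  have habs : (0:ℝ) < ‖z‖ := norm_pos_iff.mpr hz
  rw [Real.rpow_def_of_pos habs]
  rw [add_mul, Complex.exp_add, Complex.ofReal_exp]
  congr 1
  · congr 1; push_cast; ring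
  · congr 1; ring

lemma csqrt_eq_cpow {z : ℂ} (hz : z ≠ 0) (h : 0 ≤ Complex.arg z) :
    csqrt z = z ^ ((1:ℂ)/2) := by
  rw [Complex.cpow_def_of_ne_zero hz, log_eq, csqrt, argNN, if_neg (not_lt.2 h)]
  have habs : (0:ℝ) < ‖z‖ := norm_pos_iff.mpr hz
  rw [Real.rpow_def_of_pos habs]
  rw [add_mul, Complex.exp_add, Complex.ofReal_exp]
  congr 1
  · congr 1; push_cast; ring
  · congr 1; ring

lemma csqrt_eq_neg_cpow {z : ℂ} (h : Complex.arg z < 0) :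
    csqrt z = -(z ^ ((1:ℂ)/2)) := by
  have hz : z ≠ 0 := by
    intro h0; rw [h0] at h; simp [Complex.arg_zero] at h
  rw [Complex.cpow_def_of_ne_zero hz, log_eq, csqrt, argNN, if_pos h]
  have habs : (0:ℝ) < ‖z‖ := norm_pos_iff.mpr hz
  rw [Real.rpow_def_of_pos habs]
  rw [add_mul, Complex.exp_add, Complex.ofReal_exp]
  rw [show (Complex.I * ((Complex.arg z + 2 * Real.pi : ℝ) : ℂ) / 2)
      = (Complex.arg z : ℂ) * Complex.I * (1/2) + Real.pi * Complex.I by push_cast; ring]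
  rw [Complex.exp_add, Complex.exp_pi_mul_I]
  rw [show ((Real.log (‖z‖)):ℂ) * (1/2) = ((Real.log (‖z‖) * (1/2) : ℝ) : ℂ) by push_cast; ring]
  ring

lemma abs_ccbrt (z : ℂ) : ‖ccbrt z‖ = ‖z‖ ^ ((1:ℝ)/3) := by
  rw [ccbrt, norm_mul, Complex.norm_exp, Complex.norm_real, Real.norm_eq_abs,
    _root_.abs_of_nonneg (Real.rpow_nonneg (norm_nonneg z) _)]
  simp

lemma abs_csqrt (z : ℂ) : ‖csqrt z‖ = ‖z‖ ^ ((1:ℝ)/2) := by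
  rw [csqrt, norm_mul, Complex.norm_exp, Complex.norm_real, Real.norm_eq_abs,
    _root_.abs_of_nonneg (Real.rpow_nonneg (norm_nonneg z) _)]
  simp

lemma abs_ω₃ : ‖ω₃‖ = 1 := by
  rw [ω₃, Complex.norm_exp]
  norm_num

lemma rpow_third_le {x : ℝ} (h0 : 0 ≤ x) (h : x ≤ 1e-6) : x ^ ((1:ℝ)/3) ≤ 1e-2 := by
  calc x ^ ((1:ℝ)/3) ≤ (1e-6 : ℝ) ^ ((1:ℝ)/3) :=
        Real.rpow_le_rpow h0 h (by norm_num)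
    _ = ((1e-2 : ℝ) ^ (3:ℕ)) ^ ((1:ℝ)/3) := by norm_num
    _ = 1e-2 := by
        rw [← Real.rpow_natCast (1e-2 : ℝ) 3, ← Real.rpow_mul (by norm_num)]
        norm_num

lemma abs_ccbrt_le {w : ℂ} (h : ‖w‖ ≤ 3) : ‖ccbrt w‖ ≤ 3 := by
  rw [abs_ccbrt]
  calc ‖w‖ ^ ((1:ℝ)/3) ≤ (3:ℝ) ^ ((1:ℝ)/3) :=
        Real.rpow_le_rpow (norm_nonneg w) h (by norm_num)
    _ ≤ (3:ℝ) ^ (1:ℝ) := Real.rpow_le_rpow_of_exponent_le (by norm_num) (by norm_num)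
    _ = 3 := by norm_num

lemma abs_pm_one_csqrt {z : ℂ} (hz : ‖z‖ ≤ 1e-6) (c : ℂ) (hc : ‖c‖ = 1) :
    ‖c + csqrt (1 - z)‖ ≤ 3 := by
  have h1 : ‖1 - z‖ ≤ 2 := by
    calc ‖1 - z‖ ≤ ‖(1:ℂ)‖ + ‖z‖ := by
          simpa [sub_eq_add_neg] using norm_add_le 1 (-z)
      _ ≤ 2 := by rw [norm_one]; linarith
  have hs : ‖csqrt (1 - z)‖ ≤ 2 := by
    rw [abs_csqrt]
    calc ‖1-z‖ ^ ((1:ℝ)/2) ≤ (2:ℝ) ^ ((1:ℝ)/2) :=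
          Real.rpow_le_rpow (norm_nonneg _) h1 (by norm_num)
      _ ≤ (2:ℝ) ^ (1:ℝ) := Real.rpow_le_rpow_of_exponent_le (by norm_num) (by norm_num)
      _ = 2 := by norm_num
  calc ‖c + csqrt (1 - z)‖ ≤ ‖c‖ + ‖csqrt (1-z)‖ :=
        norm_add_le _ _
    _ ≤ 3 := by rw [hc]; linarith

lemma one_le_abs_phi {z : ℂ} (hz : ‖z‖ ≤ 1e-6) : 1 ≤ ‖phi z‖ := by
  rw [phi]
  set W : ℂ := (3 * ω₃ / 2) * ccbrt z *
    (ω₃ * ccbrt (-1 + csqrt (1 - z)) + ccbrt (-1 - csqrt (1 - z))) with hW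
  have hWb : ‖W‖ ≤ 9/100 := by
    rw [hW, norm_mul, norm_mul]
    have h1 : ‖3 * ω₃ / 2‖ = 3/2 := by
      rw [norm_div, norm_mul, abs_ω₃]; norm_num
    have h2 : ‖ccbrt z‖ ≤ 1e-2 := by
      rw [abs_ccbrt]; exact rpow_third_le (norm_nonneg z) hz
    have h3 : ‖ω₃ * ccbrt (-1 + csqrt (1 - z)) + ccbrt (-1 - csqrt (1 - z))‖ ≤ 6 := by
      calc ‖_‖ ≤ ‖ω₃ * ccbrt (-1 + csqrt (1 - z))‖
            + ‖ccbrt (-1 - csqrt (1 - z))‖ := norm_add_le _ _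
        _ ≤ 6 := by
            rw [norm_mul, abs_ω₃, one_mul]
            have hA := abs_ccbrt_le (abs_pm_one_csqrt hz (-1) (by simp))
            have hB : ‖ccbrt (-1 - csqrt (1-z))‖ ≤ 3 := by
              refine abs_ccbrt_le ?_
              rw [show (-1 - csqrt (1-z) : ℂ) = -(1 + csqrt (1-z)) by ring,
                norm_neg]
              exact abs_pm_one_csqrt hz 1 (by simp)
            linarith
    calc ‖3 * ω₃ / 2‖ * ‖ccbrt z‖ * ‖_‖
        ≤ (3/2) * 1e-2 * 6 := by
          rw [h1]
          have n2 : (0:ℝ) ≤ ‖ccbrt z‖ := norm_nonneg _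
          have n3 : (0:ℝ) ≤ ‖ω₃ * ccbrt (-1 + csqrt (1 - z)) + ccbrt (-1 - csqrt (1 - z))‖ := norm_nonneg _
          nlinarith
      _ ≤ 9/100 := by norm_num
  have key : 1 - ‖W‖ ≤ ‖W - 1‖ := by
    have h4 : ‖(1:ℂ)‖ ≤ ‖1 - W‖ + ‖W‖ := by
      calc ‖(1:ℂ)‖ = ‖(1 - W) + W‖ := by ring_nf
        _ ≤ _ := norm_add_le _ _
    rw [norm_one] at h4
    rw [norm_sub_rev W 1]
    linarith
  rw [norm_mul]
  have : ‖(27/4 : ℂ)‖ = 27/4 := by norm_num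
  rw [this]
  nlinarith [norm_nonneg (W-1)]

lemma re_cpow_half_nonneg (w : ℂ) : 0 ≤ (w ^ ((1:ℂ)/2)).re := by
  rcases eq_or_ne w 0 with h|h
  · simp [h, Complex.zero_cpow (show ((1:ℂ)/2) ≠ 0 by norm_num)]
  · rw [Complex.cpow_def_of_ne_zero h, Complex.exp_re]
    apply mul_nonneg (Real.exp_nonneg _)
    apply Real.cos_nonneg_of_mem_Icc
    have h1 : (Complex.log w * (1/2)).im = Complex.arg w * (1/2) := by
      simp [Complex.mul_im, Complex.log_im]
    rw [h1]
    constructor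
    · have := Complex.neg_pi_lt_arg w
      have hπ : (0:ℝ) < Real.pi := Real.pi_pos
      nlinarith
    · have := Complex.arg_le_pi w
      have hπ : (0:ℝ) < Real.pi := Real.pi_pos
      nlinarith

lemma cpow_half_mul_self {w : ℂ} (hw : w ≠ 0) : w ^ ((1:ℂ)/2) * w ^ ((1:ℂ)/2) = w := by
  rw [← Complex.cpow_add _ _ hw]; norm_num

lemma im_cpow_half_ne {w : ℂ} (hw : w.im ≠ 0) : (w ^ ((1:ℂ)/2)).im ≠ 0 := by
  have hw0 : w ≠ 0 := fun h => hw (by simp [h])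
  have h2 : (w ^ ((1:ℂ)/2) * w ^ ((1:ℂ)/2)).im = w.im := by rw [cpow_half_mul_self hw0]
  rw [Complex.mul_im] at h2
  intro h0
  rw [h0] at h2
  simp at h2
  exact hw h2.symm

/-- the analytic chart: `c₁` multiplies the `(-1-√(1-z))` term. -/
noncomputable def Hgen (c₁ c₂ : ℂ) (z : ℂ) : ℂ :=
  (27/4) * ((3 * ω₃ / 2) * (z ^ ((1:ℂ)/3) *
    (c₁ * (-1 - (1 - z) ^ ((1:ℂ)/2)) ^ ((1:ℂ)/3)
      + c₂ * (-1 + (1 - z) ^ ((1:ℂ)/2)) ^ ((1:ℂ)/3))) - 1)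

lemma phi_eq_upper {z : ℂ} (him : 0 < z.im) : phi z = Hgen ω₃ 1 z := by
  have hz : z ≠ 0 := fun h => by simp [h] at him
  have h1zim : (1 - z).im < 0 := by simp [Complex.sub_im]; linarith
  have h1z : (1 - z) ≠ 0 := fun h => by rw [h] at h1zim; simp at h1zim
  have harg : Complex.arg (1 - z) < 0 := Complex.arg_neg_iff.2 h1zim
  set v : ℂ := (1 - z) ^ ((1:ℂ)/2) with hv
  have hvim : v.im ≠ 0 := im_cpow_half_ne (by intro h; rw [h] at h1zim; simp at h1zim)
  have hvv : v * v = 1 - z := cpow_half_mul_self h1z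
  have hbne : (-1 + v) ≠ 0 := by
    intro h
    have : v = 1 := by linear_combination h
    rw [this] at hvv; simp at hvv
    exact hz (by linear_combination hvv)
  have hane : (-1 - v) ≠ 0 := by
    intro h
    have : v = -1 := by linear_combination -h
    rw [this] at hvv; simp at hvv
    exact hz (by linear_combination hvv)
  rw [phi, Hgen, ccbrt_eq_cpow hz, csqrt_eq_neg_cpow harg, ← hv]
  rw [show (-1 + -v : ℂ) = -1 - v by ring, show (-1 - -v : ℂ) = -1 + v by ring]
  rw [ccbrt_eq_cpow hane, ccbrt_eq_cpow hbne]
  ring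

lemma phi_eq_lower {z : ℂ} (him : z.im < 0) : phi z = Hgen 1 ω₃ z := by
  have hz : z ≠ 0 := fun h => by simp [h] at him
  have h1zim : 0 < (1 - z).im := by simp [Complex.sub_im]; linarith
  have h1z : (1 - z) ≠ 0 := fun h => by rw [h] at h1zim; simp at h1zim
  have harg : 0 ≤ Complex.arg (1 - z) := Complex.arg_nonneg_iff.2 (le_of_lt h1zim)
  set v : ℂ := (1 - z) ^ ((1:ℂ)/2) with hv
  have hvv : v * v = 1 - z := cpow_half_mul_self h1z
  have hbne : (-1 + v) ≠ 0 := by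
    intro h
    have : v = 1 := by linear_combination h
    rw [this] at hvv; simp at hvv
    exact hz (by linear_combination hvv)
  have hane : (-1 - v) ≠ 0 := by
    intro h
    have : v = -1 := by linear_combination -h
    rw [this] at hvv; simp at hvv
    exact hz (by linear_combination hvv)
  rw [phi, Hgen, ccbrt_eq_cpow hz, csqrt_eq_cpow h1z harg, ← hv]
  rw [ccbrt_eq_cpow hane, ccbrt_eq_cpow hbne]
  ring

lemma rpow_anti {x y e : ℝ} (hx : 0 < x) (hxy : x ≤ y) (he : 0 ≤ e) :
    y ^ (-e) ≤ x ^ (-e) := by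
  have hy : 0 < y := lt_of_lt_of_le hx hxy
  rw [Real.rpow_neg hx.le, Real.rpow_neg hy.le]
  exact inv_anti₀ (Real.rpow_pos_of_pos hx e) (Real.rpow_le_rpow hx.le hxy he)

set_option maxHeartbeats 2000000 in
lemma hgen_deriv {c₁ c₂ z : ℂ} (hc₁ : ‖c₁‖ = 1) (hc₂ : ‖c₂‖ = 1)
    (him : z.im ≠ 0) (habs : ‖z‖ ≤ 1e-6) :
    ∃ D : ℂ, HasDerivAt (Hgen c₁ c₂) D z ∧
      ‖D‖ ≤ 41 * ‖z‖ ^ (-(2:ℝ)/3) := by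
  have hz : z ≠ 0 := fun h => him (by simp [h])
  have hε : 0 < ‖z‖ := norm_pos_iff.mpr hz
  set ε : ℝ := ‖z‖ with hεdef
  have hre : z.re ≤ ε := le_trans (le_abs_self _) (Complex.abs_re_le_norm z)
  have h1zre : 0 < (1 - z).re := by
    simp only [Complex.sub_re, Complex.one_re]
    have : (1e-6 : ℝ) < 1 := by norm_num
    linarith
  have slit1z : (1 - z) ∈ Complex.slitPlane := Complex.mem_slitPlane_iff.2 (Or.inl h1zre)
  have slitz : z ∈ Complex.slitPlane := Complex.mem_slitPlane_iff.2 (Or.inr him)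
  set v : ℂ := (1 - z) ^ ((1:ℂ)/2) with hv
  have h1zim : (1 - z).im ≠ 0 := by
    simp only [Complex.sub_im, Complex.one_im, zero_sub]
    exact neg_ne_zero.2 him
  have h1z : (1 - z) ≠ 0 := fun h => h1zim (by simp [h])
  have hvim : v.im ≠ 0 := im_cpow_half_ne h1zim
  have hvv : v * v = 1 - z := cpow_half_mul_self h1z
  have slita : (-1 - v) ∈ Complex.slitPlane := by
    apply Complex.mem_slitPlane_iff.2 (Or.inr ?_)
    simp only [Complex.sub_im, Complex.neg_im, Complex.one_im, neg_zero, zero_sub]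
    exact neg_ne_zero.2 hvim
  have slitb : (-1 + v) ∈ Complex.slitPlane := by
    apply Complex.mem_slitPlane_iff.2 (Or.inr ?_)
    simpa using hvim
  -- derivative construction
  set v' : ℂ := ((1:ℂ)/2) * (1-z) ^ ((1:ℂ)/2 - 1) * (-1) with hv'def
  have hlin : HasDerivAt (fun w : ℂ => 1 - w) (-1 : ℂ) z := by
    simpa using (hasDerivAt_id z).const_sub (1:ℂ)
  have hvd : HasDerivAt (fun w : ℂ => (1 - w) ^ ((1:ℂ)/2)) v' z := hlin.cpow_const slit1z
  have ha : HasDerivAt (fun w : ℂ => -1 - (1 - w) ^ ((1:ℂ)/2)) (-v') z := hvd.const_sub (-1)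
  have hb : HasDerivAt (fun w : ℂ => -1 + (1 - w) ^ ((1:ℂ)/2)) v' z := by
    simpa using hvd.const_add (-1)
  have hA : HasDerivAt (fun w : ℂ => (-1 - (1 - w) ^ ((1:ℂ)/2)) ^ ((1:ℂ)/3))
      (((1:ℂ)/3) * (-1 - v) ^ ((1:ℂ)/3 - 1) * (-v')) z := ha.cpow_const slita
  have hB : HasDerivAt (fun w : ℂ => (-1 + (1 - w) ^ ((1:ℂ)/2)) ^ ((1:ℂ)/3))
      (((1:ℂ)/3) * (-1 + v) ^ ((1:ℂ)/3 - 1) * v') z := hb.cpow_const slitb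
  have hz3 : HasDerivAt (fun w : ℂ => w ^ ((1:ℂ)/3)) (((1:ℂ)/3) * z ^ ((1:ℂ)/3 - 1)) z :=
    (Complex.hasStrictDerivAt_cpow_const slitz).hasDerivAt
  set S : ℂ := c₁ * (-1 - v) ^ ((1:ℂ)/3) + c₂ * (-1 + v) ^ ((1:ℂ)/3) with hS
  set S' : ℂ := c₁ * (((1:ℂ)/3) * (-1 - v) ^ ((1:ℂ)/3 - 1) * (-v'))
      + c₂ * (((1:ℂ)/3) * (-1 + v) ^ ((1:ℂ)/3 - 1) * v') with hS'
  have hSd : HasDerivAt (fun w : ℂ => c₁ * (-1 - (1 - w) ^ ((1:ℂ)/2)) ^ ((1:ℂ)/3)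
      + c₂ * (-1 + (1 - w) ^ ((1:ℂ)/2)) ^ ((1:ℂ)/3)) S' z :=
    (hA.const_mul c₁).add (hB.const_mul c₂)
  have hPd := hz3.mul hSd
  have hfull := ((hPd.const_mul (3 * ω₃ / 2)).sub_const 1).const_mul (27/4 : ℂ)
  refine ⟨_, hfull, ?_⟩
  rw [neg_div]
  -- basic abs facts
  have hε1 : ε ≤ 1 := le_trans habs (by norm_num)
  have h1z_ub : ‖1 - z‖ ≤ 2 := by
    calc ‖1 - z‖ ≤ ‖(1:ℂ)‖ + ‖z‖ := by
          simpa [sub_eq_add_neg] using norm_add_le 1 (-z)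
      _ ≤ 2 := by rw [norm_one]; linarith
  have h1z_lb : (1:ℝ)/2 ≤ ‖1 - z‖ := by
    have : (1:ℝ) = ‖(1 - z) + z‖ := by norm_num
    have h4 := norm_add_le (1 - z) z
    rw [← this] at h4
    linarith
  have hvabs : ‖v‖ = ‖1 - z‖ ^ ((1:ℝ)/2) := by
    rw [hv, show ((1:ℂ)/2) = (((1:ℝ)/2 : ℝ) : ℂ) by norm_num, Complex.norm_cpow_real]
  have hvub : ‖v‖ ≤ 2 := by
    rw [hvabs]
    calc ‖1-z‖ ^ ((1:ℝ)/2) ≤ (2:ℝ) ^ ((1:ℝ)/2) :=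
          Real.rpow_le_rpow (norm_nonneg _) h1z_ub (by norm_num)
      _ ≤ (2:ℝ) ^ (1:ℝ) := Real.rpow_le_rpow_of_exponent_le (by norm_num) (by norm_num)
      _ = 2 := by norm_num
  have hv'abs : ‖v'‖ ≤ 1 := by
    rw [hv'def, norm_mul, norm_mul]
    have e1 : ‖(1:ℂ)/2‖ = 1/2 := by rw [norm_div]; simp
    have e2 : ‖(1-z) ^ ((1:ℂ)/2 - 1)‖ = ‖1-z‖ ^ (-((1:ℝ)/2)) := by
      rw [show ((1:ℂ)/2 - 1) = ((-((1:ℝ)/2) : ℝ) : ℂ) by push_cast; ring, Complex.norm_cpow_real]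
    have e3 : ‖1-z‖ ^ (-((1:ℝ)/2)) ≤ ((1:ℝ)/2) ^ (-((1:ℝ)/2)) :=
      rpow_anti (by norm_num) h1z_lb (by norm_num)
    have e4 : ((1:ℝ)/2) ^ (-((1:ℝ)/2)) ≤ 2 := by
      have h5 : ((1:ℝ)/2) ^ ((1:ℝ)/1) ≤ ((1:ℝ)/2) ^ ((1:ℝ)/2) :=
        Real.rpow_le_rpow_of_exponent_ge (by norm_num) (by norm_num) (by norm_num)
      rw [show ((1:ℝ)/1) = (1:ℝ) by norm_num, Real.rpow_one] at h5
      rw [Real.rpow_neg (by norm_num)]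
      calc (((1:ℝ)/2) ^ ((1:ℝ)/2))⁻¹ ≤ ((1:ℝ)/2)⁻¹ := by
            apply inv_anti₀ (by norm_num) h5
        _ = 2 := by norm_num
    have e5 : ‖(-1 : ℂ)‖ = 1 := by simp
    rw [e1, e2, e5, mul_one]
    have := e3.trans e4
    linarith
  -- bounds on S
  have habs_a : ‖-1 - v‖ ≤ 3 := by
    rw [show (-1 - v : ℂ) = -(1 + v) by ring, norm_neg]
    calc ‖1 + v‖ ≤ ‖(1:ℂ)‖ + ‖v‖ := norm_add_le _ _
      _ ≤ 3 := by rw [norm_one]; linarith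
  have habs_b : ‖-1 + v‖ ≤ 3 := by
    calc ‖-1 + v‖ ≤ ‖(-1:ℂ)‖ + ‖v‖ := norm_add_le _ _
      _ ≤ 3 := by simp; linarith
  have hthird : ∀ w : ℂ, ‖w‖ ≤ 3 → ‖w ^ ((1:ℂ)/3)‖ ≤ 3 := by
    intro w hw
    rw [show ((1:ℂ)/3) = (((1:ℝ)/3 : ℝ) : ℂ) by norm_num, Complex.norm_cpow_real]
    calc ‖w‖ ^ ((1:ℝ)/3) ≤ (3:ℝ) ^ ((1:ℝ)/3) :=
          Real.rpow_le_rpow (norm_nonneg w) hw (by norm_num)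
      _ ≤ (3:ℝ) ^ (1:ℝ) := Real.rpow_le_rpow_of_exponent_le (by norm_num) (by norm_num)
      _ = 3 := by norm_num
  have hSb : ‖S‖ ≤ 6 := by
    rw [hS]
    calc ‖_‖ ≤ ‖c₁ * (-1 - v) ^ ((1:ℂ)/3)‖
          + ‖c₂ * (-1 + v) ^ ((1:ℂ)/3)‖ := norm_add_le _ _
      _ ≤ 6 := by
          rw [norm_mul, norm_mul, hc₁, hc₂, one_mul, one_mul]
          have := hthird _ habs_a
          have := hthird _ habs_b
          linarith
  -- lower bounds
  have ha_lb : (1:ℝ) ≤ ‖-1 - v‖ := by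
    rw [show (-1 - v : ℂ) = -(1 + v) by ring, norm_neg]
    have h6 : (1 + v).re ≤ ‖1 + v‖ := Complex.re_le_norm _
    have h7 : (0:ℝ) ≤ v.re := by rw [hv]; exact re_cpow_half_nonneg _
    have h8 : (1 + v).re = 1 + v.re := by simp
    linarith
  have hb_lb : ε/3 ≤ ‖-1 + v‖ := by
    have hkey : (-1 + v) * (1 + v) = -z := by linear_combination hvv
    have h9 : ‖-1 + v‖ * ‖1 + v‖ = ε := by
      rw [← norm_mul, hkey, norm_neg]
    have h10 : ‖1 + v‖ ≤ 3 := by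
      calc ‖1 + v‖ ≤ ‖(1:ℂ)‖ + ‖v‖ := norm_add_le _ _
        _ ≤ 3 := by rw [norm_one]; linarith
    nlinarith [norm_nonneg (-1 + v)]
  -- powers with exponent 1/3 - 1
  have habs_apow : ‖(-1 - v) ^ ((1:ℂ)/3 - 1)‖ ≤ 1 := by
    rw [show ((1:ℂ)/3 - 1) = ((-((2:ℝ)/3) : ℝ) : ℂ) by push_cast; ring, Complex.norm_cpow_real]
    exact Real.rpow_le_one_of_one_le_of_nonpos ha_lb (by norm_num)
  have hone_le : (1:ℝ) ≤ ε ^ (-((2:ℝ)/3)) := by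
    have := rpow_anti hε hε1 (show (0:ℝ) ≤ (2:ℝ)/3 by norm_num)
    rwa [Real.one_rpow] at this
  have habs_bpow : ‖(-1 + v) ^ ((1:ℂ)/3 - 1)‖ ≤ 3 * ε ^ (-((2:ℝ)/3)) := by
    rw [show ((1:ℂ)/3 - 1) = ((-((2:ℝ)/3) : ℝ) : ℂ) by push_cast; ring, Complex.norm_cpow_real]
    have h11 : ‖-1 + v‖ ^ (-((2:ℝ)/3)) ≤ (ε/3) ^ (-((2:ℝ)/3)) :=
      rpow_anti (by positivity) hb_lb (by norm_num)
    have h12 : (ε/3 : ℝ) ^ (-((2:ℝ)/3)) = ε ^ (-((2:ℝ)/3)) * ((1:ℝ)/3) ^ (-((2:ℝ)/3)) := by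
      rw [show (ε/3 : ℝ) = ε * (1/3) by ring, Real.mul_rpow hε.le (by norm_num)]
    have h13 : ((1:ℝ)/3) ^ (-((2:ℝ)/3)) ≤ 3 := by
      have h14 : ((1:ℝ)/3) ^ (1:ℝ) ≤ ((1:ℝ)/3) ^ ((2:ℝ)/3) :=
        Real.rpow_le_rpow_of_exponent_ge (by norm_num) (by norm_num) (by norm_num)
      rw [Real.rpow_one] at h14
      rw [Real.rpow_neg (by norm_num)]
      calc (((1:ℝ)/3) ^ ((2:ℝ)/3))⁻¹ ≤ ((1:ℝ)/3)⁻¹ := inv_anti₀ (by norm_num) h14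
        _ = 3 := by norm_num
    calc ‖-1 + v‖ ^ (-((2:ℝ)/3)) ≤ (ε/3) ^ (-((2:ℝ)/3)) := h11
      _ = ε ^ (-((2:ℝ)/3)) * ((1:ℝ)/3) ^ (-((2:ℝ)/3)) := h12
      _ ≤ ε ^ (-((2:ℝ)/3)) * 3 := by
          have := Real.rpow_nonneg hε.le (-((2:ℝ)/3))
          nlinarith
      _ = 3 * ε ^ (-((2:ℝ)/3)) := by ring
  -- bound S'
  have hS'b : ‖S'‖ ≤ 2 * ε ^ (-((2:ℝ)/3)) := by
    rw [hS']
    have habs_third : ‖(1:ℂ)/3‖ = 1/3 := by rw [norm_div]; simp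
    have t1 : ‖c₁ * (((1:ℂ)/3) * (-1 - v) ^ ((1:ℂ)/3 - 1) * (-v'))‖
        ≤ (1:ℝ)/3 := by
      rw [norm_mul, hc₁, one_mul, norm_mul, norm_mul, habs_third, norm_neg]
      have := norm_nonneg ((-1 - v) ^ ((1:ℂ)/3 - 1))
      have := norm_nonneg v'
      nlinarith
    have t2 : ‖c₂ * (((1:ℂ)/3) * (-1 + v) ^ ((1:ℂ)/3 - 1) * v')‖
        ≤ ε ^ (-((2:ℝ)/3)) := by
      rw [norm_mul, hc₂, one_mul, norm_mul, norm_mul, habs_third]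
      have n1 := norm_nonneg ((-1 + v) ^ ((1:ℂ)/3 - 1))
      have n2 := norm_nonneg v'
      nlinarith
    calc ‖_‖ ≤ _ + _ := norm_add_le _ _
      _ ≤ (1:ℝ)/3 + ε ^ (-((2:ℝ)/3)) := add_le_add t1 t2
      _ ≤ 2 * ε ^ (-((2:ℝ)/3)) := by linarith
  -- assemble
  have habs32 : ‖3 * ω₃ / 2‖ = 3/2 := by
    rw [norm_div, norm_mul, abs_ω₃]; norm_num
  have habs274 : ‖(27/4 : ℂ)‖ = 27/4 := by rw [norm_div]; simp
  have ez1 : ‖z ^ ((1:ℂ)/3 - 1)‖ = ε ^ (-((2:ℝ)/3)) := by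
    rw [show ((1:ℂ)/3 - 1) = ((-((2:ℝ)/3) : ℝ) : ℂ) by push_cast; ring, Complex.norm_cpow_real]
  have ez2 : ‖z ^ ((1:ℂ)/3)‖ = ε ^ ((1:ℝ)/3) := by
    rw [show ((1:ℂ)/3) = (((1:ℝ)/3 : ℝ) : ℂ) by norm_num, Complex.norm_cpow_real]
  have hX : ‖((1:ℂ)/3) * z ^ ((1:ℂ)/3 - 1) * S + z ^ ((1:ℂ)/3) * S'‖
      ≤ 4 * ε ^ (-((2:ℝ)/3)) := by
    have u1 : ‖((1:ℂ)/3) * z ^ ((1:ℂ)/3 - 1) * S‖ ≤ 2 * ε ^ (-((2:ℝ)/3)) := by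
      rw [norm_mul, norm_mul, ez1, show ‖(1:ℂ)/3‖ = 1/3 by rw [norm_div]; simp]
      have := Real.rpow_nonneg hε.le (-((2:ℝ)/3))
      nlinarith [norm_nonneg S]
    have u2 : ‖z ^ ((1:ℂ)/3) * S'‖ ≤ 2 * ε ^ (-((2:ℝ)/3)) := by
      rw [norm_mul, ez2]
      have hmul : ε ^ ((1:ℝ)/3) * ε ^ (-((2:ℝ)/3)) = ε ^ (-((1:ℝ)/3)) := by
        rw [← Real.rpow_add hε]; norm_num
      have hmono : ε ^ (-((1:ℝ)/3)) ≤ ε ^ (-((2:ℝ)/3)) :=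
        Real.rpow_le_rpow_of_exponent_ge hε hε1 (by norm_num)
      have n3 := Real.rpow_nonneg hε.le ((1:ℝ)/3)
      calc ε ^ ((1:ℝ)/3) * ‖S'‖ ≤ ε ^ ((1:ℝ)/3) * (2 * ε ^ (-((2:ℝ)/3))) := by
            nlinarith
        _ = 2 * (ε ^ ((1:ℝ)/3) * ε ^ (-((2:ℝ)/3))) := by ring
        _ = 2 * ε ^ (-((1:ℝ)/3)) := by rw [hmul]
        _ ≤ 2 * ε ^ (-((2:ℝ)/3)) := by linarith
    calc ‖_‖ ≤ _ + _ := norm_add_le _ _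
      _ ≤ 4 * ε ^ (-((2:ℝ)/3)) := by linarith
  rw [norm_mul, habs274, norm_mul, habs32]
  nlinarith [Real.rpow_nonneg hε.le (-((2:ℝ)/3))]

lemma im_cpow_half_neg {u : ℂ} (hu : u.im < 0) : (u ^ ((1:ℂ)/2)).im < 0 := by
  have hnz : u ≠ 0 := fun h => by simp [h] at hu
  have hre : 0 ≤ (u ^ ((1:ℂ)/2)).re := re_cpow_half_nonneg u
  have him : (u ^ ((1:ℂ)/2)).re * (u ^ ((1:ℂ)/2)).im
      + (u ^ ((1:ℂ)/2)).im * (u ^ ((1:ℂ)/2)).re = u.im := by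
    rw [← Complex.mul_im, cpow_half_mul_self hnz]
  by_contra hcon
  push_neg at hcon
  nlinarith

lemma tendsto_cpow_third_upper {w₀ : ℂ} (hre : w₀.re < 0) (him : w₀.im = 0) :
    Filter.Tendsto (fun w : ℂ => w ^ ((1:ℂ)/3)) (𝓝[{w : ℂ | 0 < w.im}] w₀)
      (𝓝 (Complex.exp ((Real.log (‖w₀‖) + Real.pi * Complex.I) * (1/3)))) := by
  have hlog := Complex.tendsto_log_nhdsWithin_im_nonneg_of_re_neg_of_im_zero hre him
  have hmono : 𝓝[{w : ℂ | 0 < w.im}] w₀ ≤ 𝓝[{w : ℂ | 0 ≤ w.im}] w₀ :=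
    nhdsWithin_mono _ (by intro w hw; simp only [Set.mem_setOf_eq] at hw ⊢; exact hw.le)
  have h2 : Filter.Tendsto (fun w : ℂ => Complex.exp (Complex.log w * (1/3)))
      (𝓝[{w : ℂ | 0 < w.im}] w₀)
      (𝓝 (Complex.exp ((Real.log (‖w₀‖) + Real.pi * Complex.I) * (1/3)))) :=
    (Complex.continuous_exp.tendsto _).comp ((hlog.mono_left hmono).mul_const _)
  apply h2.congr'
  filter_upwards [self_mem_nhdsWithin] with w hw
  have hw0 : w ≠ 0 := fun h => by rw [h] at hw; simp at hw
  rw [Complex.cpow_def_of_ne_zero hw0]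

lemma phi_not_diff_neg_real {z : ℂ} (hre : z.re < 0) (him : z.im = 0) :
    ¬ DifferentiableAt ℂ phi z := by
  intro hd
  set S : Set ℂ := {w : ℂ | 0 < w.im} with hSdef
  have hmem : z ∈ closure S := by
    have h0 : Filter.Tendsto (fun n : ℕ => (1/(n+1) : ℝ)) Filter.atTop (𝓝 0) :=
      tendsto_one_div_add_atTop_nhds_zero_nat
    have h1 : Filter.Tendsto (fun n : ℕ => Complex.I * ((1/(n+1) : ℝ) : ℂ))
        Filter.atTop (𝓝 0) := by
      have h2 := (Complex.continuous_ofReal.tendsto 0).comp h0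
      have h3 := h2.const_mul (Complex.I)
      simpa using h3
    have htend : Filter.Tendsto (fun n : ℕ => z + Complex.I * ((1/(n+1) : ℝ) : ℂ))
        Filter.atTop (𝓝 z) := by
      simpa using tendsto_const_nhds.add h1
    refine mem_closure_of_tendsto htend (Filter.Eventually.of_forall fun n => ?_)
    simp only [hSdef, Set.mem_setOf_eq, Complex.add_im, him, Complex.mul_im,
      Complex.I_re, Complex.I_im, Complex.ofReal_re, Complex.ofReal_im, zero_add]
    positivity
  have hne : (𝓝[S] z).NeBot := mem_closure_iff_nhdsWithin_neBot.mp hmem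
  -- real parameters
  have hz0 : z ≠ 0 := fun h => by rw [h] at hre; simp at hre
  set t : ℝ := 1 - z.re with ht
  have ht1 : 1 < t := by rw [ht]; linarith
  set s : ℝ := t ^ ((1:ℝ)/2) with hs
  have hs1 : 1 < s := by
    rw [hs]
    exact (Real.one_lt_rpow_iff_of_pos (by linarith)).2 (Or.inl ⟨ht1, by norm_num⟩)
  have h1zeq : (1 : ℂ) - z = (t : ℂ) := by
    apply Complex.ext <;> simp [ht, him]
  have hv₀ : ((1:ℂ) - z) ^ ((1:ℂ)/2) = (s : ℂ) := by
    rw [h1zeq, hs, show ((1:ℂ)/2) = (((1:ℝ)/2 : ℝ) : ℂ) by norm_num,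
      ← Complex.ofReal_cpow (by linarith : (0:ℝ) ≤ t)]
  have slit1z : ((1:ℂ) - z) ∈ Complex.slitPlane := by
    refine Complex.mem_slitPlane_iff.2 (Or.inl ?_)
    rw [h1zeq]; simp; linarith
  set E1 : ℂ := Complex.exp (((Real.log (‖z‖) : ℂ) + Real.pi * Complex.I) * (1/3))
    with hE1
  set E2 : ℂ := Complex.exp (((Real.log (‖-1 - (s:ℂ)‖) : ℂ) + Real.pi * Complex.I)
    * (1/3)) with hE2
  set B₀ : ℂ := (-1 + (s:ℂ)) ^ ((1:ℂ)/3) with hB₀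
  set L : ℂ := 27/4 * ((3 * ω₃ / 2) * (E1 * (ω₃ * E2 + 1 * B₀)) - 1) with hL
  -- limits
  have T1 : Filter.Tendsto (fun w : ℂ => w ^ ((1:ℂ)/3)) (𝓝[S] z) (𝓝 E1) :=
    tendsto_cpow_third_upper hre him
  have hcontv : ContinuousAt (fun w : ℂ => ((1:ℂ) - w) ^ ((1:ℂ)/2)) z :=
    ContinuousAt.cpow (continuous_const.sub continuous_id).continuousAt
      continuousAt_const (Complex.mem_slitPlane_iff.1 slit1z)
  have hg : Filter.Tendsto (fun w : ℂ => -1 - ((1:ℂ) - w) ^ ((1:ℂ)/2)) (𝓝[S] z)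
      (𝓝[S] (-1 - (s:ℂ))) := by
    rw [tendsto_nhdsWithin_iff]
    constructor
    · have hc : ContinuousAt (fun w : ℂ => -1 - ((1:ℂ) - w) ^ ((1:ℂ)/2)) z :=
        continuousAt_const.sub hcontv
      have := hc.continuousWithinAt (s := S)
      rw [ContinuousWithinAt, hv₀] at this
      exact this
    · filter_upwards [self_mem_nhdsWithin] with w hw
      have h1wim : ((1:ℂ) - w).im < 0 := by
        simp only [Complex.sub_im, Complex.one_im, zero_sub, neg_neg]
        have hw' : 0 < w.im := hw
        simpa using neg_lt_zero.2 hw'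
      have := im_cpow_half_neg h1wim
      simp only [hSdef, Set.mem_setOf_eq, Complex.sub_im, Complex.neg_im, Complex.one_im,
        neg_zero, zero_sub]
      linarith
  have T3 : Filter.Tendsto (fun w : ℂ => (-1 - ((1:ℂ) - w) ^ ((1:ℂ)/2)) ^ ((1:ℂ)/3))
      (𝓝[S] z) (𝓝 E2) := by
    have hrew : (-1 - (s:ℂ)).re < 0 := by simp; linarith
    have himw : (-1 - (s:ℂ)).im = 0 := by simp
    exact (tendsto_cpow_third_upper hrew himw).comp hg
  have T4 : Filter.Tendsto (fun w : ℂ => (-1 + ((1:ℂ) - w) ^ ((1:ℂ)/2)) ^ ((1:ℂ)/3))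
      (𝓝[S] z) (𝓝 B₀) := by
    have hslitb : (-1 + ((1:ℂ) - z) ^ ((1:ℂ)/2)) ∈ Complex.slitPlane := by
      refine Complex.mem_slitPlane_iff.2 (Or.inl ?_)
      rw [hv₀]; simp; linarith
    have hc : ContinuousAt (fun w : ℂ => (-1 + ((1:ℂ) - w) ^ ((1:ℂ)/2)) ^ ((1:ℂ)/3)) z :=
      ContinuousAt.cpow (continuousAt_const.add hcontv) continuousAt_const
        (Complex.mem_slitPlane_iff.1 hslitb)
    have := hc.continuousWithinAt (s := S)
    rw [ContinuousWithinAt, hv₀] at this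
    exact this
  have Tlim : Filter.Tendsto (Hgen ω₃ 1) (𝓝[S] z) (𝓝 L) := by
    have hin := T1.mul ((T3.const_mul ω₃).add (T4.const_mul 1))
    have hfin := ((hin.const_mul (3 * ω₃ / 2)).sub (tendsto_const_nhds (x := (1:ℂ)))).const_mul
      ((27:ℂ)/4)
    exact hfin
  have Tphi : Filter.Tendsto phi (𝓝[S] z) (𝓝 L) := by
    apply Tlim.congr'
    filter_upwards [self_mem_nhdsWithin] with w hw
    exact (phi_eq_upper hw).symm
  have Tphi2 : Filter.Tendsto phi (𝓝[S] z) (𝓝 (phi z)) :=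
    hd.continuousAt.continuousWithinAt
  have heq : phi z = L := tendsto_nhds_unique Tphi2 Tphi
  -- compute phi z explicitly
  have hargz : Complex.arg z = Real.pi := Complex.arg_eq_pi_iff.2 ⟨hre, him⟩
  have hccbrtz : ccbrt z = E1 := by
    rw [ccbrt_eq_cpow hz0, Complex.cpow_def_of_ne_zero hz0, log_eq, hargz, hE1]
  have hcsqrt : csqrt (1 - z) = (s:ℂ) := by
    have harg : 0 ≤ Complex.arg (1 - z) := by
      rw [h1zeq, Complex.arg_ofReal_of_nonneg (by linarith : (0:ℝ) ≤ t)]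
    have h1z0 : (1:ℂ) - z ≠ 0 := by
      rw [h1zeq]
      exact_mod_cast Complex.ofReal_ne_zero.2 (by linarith)
    rw [csqrt_eq_cpow h1z0 harg, hv₀]
  have hBne : (-1 + (s:ℂ)) ≠ 0 := by
    intro h
    have : (-1 + (s:ℂ)).re = 0 := by rw [h]; simp
    simp at this; linarith
  have hAne : (-1 - (s:ℂ)) ≠ 0 := by
    intro h
    have : (-1 - (s:ℂ)).re = 0 := by rw [h]; simp
    simp at this; linarith
  have hBc : ccbrt (-1 + (s:ℂ)) = B₀ := by rw [ccbrt_eq_cpow hBne, hB₀]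
  have hAc : ccbrt (-1 - (s:ℂ)) = E2 := by
    have hargA : Complex.arg (-1 - (s:ℂ)) = Real.pi := by
      refine Complex.arg_eq_pi_iff.2 ⟨by simp; linarith, by simp⟩
    rw [ccbrt_eq_cpow hAne, Complex.cpow_def_of_ne_zero hAne, log_eq, hargA, hE2]
  rw [phi, hcsqrt, hccbrtz, hBc, hAc, hL] at heq
  have hzero : ω₃ * (E1 * ((ω₃ - 1) * (B₀ - E2))) = 0 := by linear_combination (8/81 : ℂ) * heq
  -- contradictions
  have hω₃ne : ω₃ ≠ 0 := by rw [ω₃]; exact Complex.exp_ne_zero _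
  have hE1ne : E1 ≠ 0 := by rw [hE1]; exact Complex.exp_ne_zero _
  have hω₃1 : ω₃ - 1 ≠ 0 := by
    intro h
    have him3 : ω₃.im = 0 := by
      have : ω₃ = 1 := by linear_combination h
      rw [this]; simp
    rw [ω₃, show (2 * (Real.pi:ℂ) * Complex.I / 3) = ((2 * Real.pi / 3 : ℝ) : ℂ) * Complex.I
      by push_cast; ring] at him3
    rw [Complex.exp_ofReal_mul_I_im] at him3
    have hπ := Real.pi_pos
    have := Real.sin_pos_of_pos_of_lt_pi (show (0:ℝ) < 2 * Real.pi / 3 by linarith)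
      (show 2 * Real.pi / 3 < Real.pi by linarith)
    linarith [him3 ▸ this]
  have hBE : B₀ - E2 ≠ 0 := by
    intro h
    have hB₀im : B₀.im = 0 := by
      rw [hB₀, show (-1 + (s:ℂ)) = ((s - 1 : ℝ) : ℂ) by push_cast; ring,
        show ((1:ℂ)/3) = (((1:ℝ)/3 : ℝ) : ℂ) by norm_num,
        ← Complex.ofReal_cpow (by linarith : (0:ℝ) ≤ s - 1)]
      simp
    have hE2im : 0 < E2.im := by
      rw [hE2, Complex.exp_im]
      have hexp : (0:ℝ) < Real.exp ((((Real.log (‖-1 - (s:ℂ)‖) : ℂ)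
        + Real.pi * Complex.I) * (1/3)).re) := Real.exp_pos _
      have himexp : ((((Real.log (‖-1 - (s:ℂ)‖) : ℂ)
          + Real.pi * Complex.I) * (1/3)).im) = Real.pi / 3 := by
        simp [Complex.add_im, Complex.mul_im, Complex.mul_re]
        ring
      rw [himexp]
      have hπ := Real.pi_pos
      have := Real.sin_pos_of_pos_of_lt_pi (show (0:ℝ) < Real.pi / 3 by linarith)
        (show Real.pi / 3 < Real.pi by linarith)
      positivity
    have : B₀ = E2 := by linear_combination h
    rw [this] at hB₀im
    linarith
  exact absurd hzero (by
    apply mul_ne_zero hω₃ne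
    apply mul_ne_zero hE1ne
    exact mul_ne_zero hω₃1 hBE)

/-- near the branch point `0`, `|phi'/phi|` is `O(ε^(-2/3))`. -/
theorem phi_logderiv_near_zero :
    ∃ C > (0 : ℝ), ∃ ε₀ > (0 : ℝ), ∀ ε : ℝ, ε ∈ Set.Ioo 0 ε₀ →
      ∀ θ ∈ Set.Ioo (0 : ℝ) (2 * Real.pi),
        ‖deriv phi ((ε : ℂ) * Complex.exp (Complex.I * (θ : ℂ))) /
            phi ((ε : ℂ) * Complex.exp (Complex.I * (θ : ℂ)))‖
          ≤ C * ε ^ (-(2 : ℝ) / 3) := by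
  refine ⟨41, by norm_num, 1e-6, by norm_num, ?_⟩
  rintro ε ⟨hε0, hε1⟩ θ ⟨hθ0, hθ2⟩
  set z : ℂ := (ε:ℂ) * Complex.exp (Complex.I * (θ:ℂ)) with hzdef
  have hIθ : Complex.I * (θ:ℂ) = ((θ:ℝ):ℂ) * Complex.I := by ring
  have habsz : ‖z‖ = ε := by
    rw [hzdef, norm_mul, hIθ, Complex.norm_exp]
    simp [abs_of_pos hε0]
  have himz : z.im = ε * Real.sin θ := by
    rw [hzdef, hIθ, Complex.mul_im, Complex.exp_ofReal_mul_I_im, Complex.exp_ofReal_mul_I_re]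
    simp
  have hrez : z.re = ε * Real.cos θ := by
    rw [hzdef, hIθ, Complex.mul_re, Complex.exp_ofReal_mul_I_im, Complex.exp_ofReal_mul_I_re]
    simp
  have habs_le : ‖z‖ ≤ 1e-6 := by rw [habsz]; linarith
  have hphil : 1 ≤ ‖phi z‖ := one_le_abs_phi habs_le
  have hdiv : ‖deriv phi z / phi z‖ ≤ ‖deriv phi z‖ := by
    rw [norm_div]
    exact div_le_self (norm_nonneg _) hphil
  have hεpow : ‖z‖ ^ (-(2:ℝ)/3) = ε ^ (-(2:ℝ)/3) := by rw [habsz]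
  have hπ := Real.pi_pos
  refine le_trans hdiv ?_
  rcases lt_trichotomy θ Real.pi with hθ | hθ | hθ
  · -- upper half plane
    have hsin : 0 < Real.sin θ := Real.sin_pos_of_pos_of_lt_pi hθ0 hθ
    have him : 0 < z.im := by rw [himz]; positivity
    obtain ⟨D, hD, hDb⟩ := hgen_deriv (c₁ := ω₃) (c₂ := 1) abs_ω₃ (by simp) (ne_of_gt him)
      habs_le
    have hder : deriv phi z = D := by
      have hopen : IsOpen {w : ℂ | 0 < w.im} := isOpen_lt continuous_const Complex.continuous_im
      have hev : phi =ᶠ[𝓝 z] Hgen ω₃ 1 := by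
        filter_upwards [hopen.mem_nhds him] with w hw using phi_eq_upper hw
      rw [hev.deriv_eq]
      exact hD.deriv
    rw [hder, ← habsz]
    exact hDb
  · -- negative real axis
    have hsin : Real.sin θ = 0 := by rw [hθ, Real.sin_pi]
    have hcos : Real.cos θ = -1 := by rw [hθ, Real.cos_pi]
    have hnd := phi_not_diff_neg_real (z := z)
      (by rw [hrez, hcos]; nlinarith) (by rw [himz, hsin]; ring)
    rw [deriv_zero_of_not_differentiableAt hnd]
    simp only [zero_div, norm_zero]
    positivity
  · -- lower half plane
    have hsin : Real.sin θ < 0 := by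
      have h1 : 0 < Real.sin (θ - Real.pi) := Real.sin_pos_of_pos_of_lt_pi
        (by linarith) (by linarith)
      rw [Real.sin_sub_pi] at h1
      linarith
    have him : z.im < 0 := by
      rw [himz]
      exact mul_neg_of_pos_of_neg hε0 hsin
    obtain ⟨D, hD, hDb⟩ := hgen_deriv (c₁ := (1:ℂ)) (c₂ := ω₃) (by simp) abs_ω₃
      (ne_of_lt him) habs_le
    have hder : deriv phi z = D := by
      have hopen : IsOpen {w : ℂ | w.im < 0} := isOpen_lt Complex.continuous_im continuous_const
      have hev : phi =ᶠ[𝓝 z] Hgen 1 ω₃ := by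
        filter_upwards [hopen.mem_nhds him] with w hw using phi_eq_lower hw
      rw [hev.deriv_eq]
      exact hD.deriv
    rw [hder, ← habsz]
    exact hDb
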